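/- arXiv:1301.6224 — 2 statements merged into one kernel-verified Lean document; each statement's English description precedes it below -/
import Mathlib

section
/- For every integer d ≥ 2, the function ρ_d(x) = d·√(4(d-1) - x²) / (2π·(d² - x²)) on [-2√(d-1), 2√(d-1)] is a probability density, i.e., ∫_{-2√(d-1)}^{2√(d-1)} ρ_d(x) dx = 1. -/
open Real

section KestenMcKayAux

open MeasureTheory Set

private lemma km_aux_integrable_two :
    IntervalIntegrable (fun x : ℝ => 2 * Real.sqrt (4 - x ^ 2) / (2 * π * (4 - x ^ 2)))
      volume (-2) 2 := by
  have h1 : IntervalIntegrable (fun x : ℝ => (2 - x) ^ (-(1/2) : ℝ)) volume (-2) 2 := by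
    have := (intervalIntegral.intervalIntegrable_rpow' (a := 4) (b := 0)
      (by norm_num : (-1:ℝ) < -(1/2))).comp_sub_left 2
    norm_num at this
    exact this
  have h2 : IntervalIntegrable (fun x : ℝ => (2 + x) ^ (-(1/2) : ℝ)) volume (-2) 2 := by
    have := (intervalIntegral.intervalIntegrable_rpow' (a := 0) (b := 4)
      (by norm_num : (-1:ℝ) < -(1/2))).comp_add_left 2
    norm_num at this
    exact this
  have hφ : IntervalIntegrable
      (fun x : ℝ => (π * Real.sqrt 2)⁻¹ * ((2 - x) ^ (-(1/2) : ℝ) + (2 + x) ^ (-(1/2) : ℝ)))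
      volume (-2) 2 := ((h1.add h2).const_mul _)
  apply hφ.mono_fun'
  · apply Measurable.aestronglyMeasurable
    apply Measurable.div
    · exact (continuous_const.mul (Real.continuous_sqrt.comp (by continuity))).measurable
    · exact (by continuity : Continuous fun x : ℝ => 2 * π * (4 - x ^ 2)).measurable
  · rw [Set.uIoc_of_le (by norm_num : (-2:ℝ) ≤ 2)]
    filter_upwards [MeasureTheory.ae_restrict_mem measurableSet_Ioc] with x hx
    obtain ⟨hx1, hx2⟩ := hx
    have h2x : (0:ℝ) ≤ 2 - x := by linarith
    have h2x' : (0:ℝ) < 2 + x := by linarith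
    simp only [Real.norm_eq_abs]
    rcases eq_or_lt_of_le hx2 with h | h
    · subst h
      norm_num
      positivity
    · have hu : 0 < Real.sqrt (2 - x) := Real.sqrt_pos.mpr (by linarith)
      have hv : 0 < Real.sqrt (2 + x) := Real.sqrt_pos.mpr h2x'
      set u := Real.sqrt (2 - x) with hudef
      set v := Real.sqrt (2 + x) with hvdef
      have hu2 : u ^ 2 = 2 - x := Real.sq_sqrt h2x
      have hv2 : v ^ 2 = 2 + x := Real.sq_sqrt h2x'.le
      have hfx : 2 * Real.sqrt (4 - x ^ 2) / (2 * π * (4 - x ^ 2)) = (π * (u * v))⁻¹ := by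
        rw [show (4:ℝ) - x ^ 2 = (2 - x) * (2 + x) by ring, Real.sqrt_mul h2x, ← hudef, ← hvdef,
          show (2 - x) * (2 + x) = (u * v) ^ 2 by rw [mul_pow, hu2, hv2]]
        rw [eq_comm, inv_eq_one_div]
        rw [div_eq_div_iff (by positivity) (by positivity)]
        ring
      rw [hfx, abs_of_nonneg (by positivity)]
      have e1 : (2 - x) ^ (-(1/2) : ℝ) = u⁻¹ := by
        rw [Real.rpow_neg h2x, ← Real.sqrt_eq_rpow]
      have e2 : (2 + x) ^ (-(1/2) : ℝ) = v⁻¹ := by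
        rw [Real.rpow_neg h2x'.le, ← Real.sqrt_eq_rpow]
      rw [e1, e2]
      have hs2 : (0:ℝ) < Real.sqrt 2 := by positivity
      rcases le_total x 0 with hx0 | hx0
      · have hub : Real.sqrt 2 ≤ u := Real.sqrt_le_sqrt (by linarith)
        calc (π * (u * v))⁻¹ ≤ (π * (Real.sqrt 2 * v))⁻¹ := by
              gcongr
            _ = (π * Real.sqrt 2)⁻¹ * v⁻¹ := by rw [mul_inv, mul_inv, mul_inv]; ring
            _ ≤ (π * Real.sqrt 2)⁻¹ * (u⁻¹ + v⁻¹) := by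
              gcongr
              exact le_add_of_nonneg_left (by positivity)
      · have hvb : Real.sqrt 2 ≤ v := Real.sqrt_le_sqrt (by linarith)
        calc (π * (u * v))⁻¹ ≤ (π * (u * Real.sqrt 2))⁻¹ := by
              gcongr
            _ = (π * Real.sqrt 2)⁻¹ * u⁻¹ := by rw [mul_inv, mul_inv, mul_inv]; ring
            _ ≤ (π * Real.sqrt 2)⁻¹ * (u⁻¹ + v⁻¹) := by
              gcongr
              exact le_add_of_nonneg_right (by positivity)

private lemma km_alg (D t a s r : ℝ) (hD0 : 0 < D) (ht0 : 0 < t) (ha0 : 0 < a)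
    (hs0 : 0 < s) (hr0 : 0 < r)
    (key : r ^ 2 = s ^ 2 - (D - 2) ^ 2) :
    D * r / (2 * π * s ^ 2) = D / (2 * π) * (1 / (r / a) * (1 / a))
        - (D - 2) / (2 * π) * (1 / (D * r / (2 * t * s)) * ((D - 2) * D ^ 2 / (2 * t * s ^ 3))) := by
  have hπ : π ≠ 0 := Real.pi_ne_zero
  rw [one_div_div, one_div_div]
  field_simp
  linear_combination key

end KestenMcKayAux

set_option maxHeartbeats 2000000 in
open MeasureTheory Set in
theorem kesten_mckay_density (d : ℕ) (hd : 2 ≤ d) :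
    ∫ x in (-(2 * Real.sqrt (d - 1)))..(2 * Real.sqrt (d - 1)),
      (d : ℝ) * Real.sqrt (4 * (d - 1) - x ^ 2) / (2 * π * ((d : ℝ) ^ 2 - x ^ 2)) = 1 := by
  have hD' : (2:ℝ) ≤ (d:ℝ) := by exact_mod_cast hd
  set D : ℝ := (d:ℝ) with hDdef
  have hD : (2:ℝ) ≤ D := hD'
  have hD1 : (0:ℝ) ≤ D - 1 := by linarith
  set t : ℝ := Real.sqrt (D - 1) with htdef
  have ht2 : t ^ 2 = D - 1 := Real.sq_sqrt hD1
  have ht1 : 1 ≤ t := by nlinarith [Real.sqrt_nonneg (D - 1)]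
  have ht0 : 0 < t := by linarith
  set a : ℝ := 2 * t with hadef
  have ha0 : 0 < a := by rw [hadef]; positivity
  have ha2 : a ^ 2 = 4 * (D - 1) := by rw [hadef]; nlinarith
  have haD : a ≤ D := by nlinarith
  set f : ℝ → ℝ := fun x => D * Real.sqrt (4 * (D - 1) - x ^ 2) / (2 * π * (D ^ 2 - x ^ 2))
    with hfdef
  set F : ℝ → ℝ := fun x => D / (2 * π) * Real.arcsin (x / a)
      - (D - 2) / (2 * π) * Real.arcsin ((D - 2) * x / (2 * t * Real.sqrt (D ^ 2 - x ^ 2)))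
    with hFdef
  clear_value D t a f F
  clear hD'
  have hD0 : (0:ℝ) < D := by linarith
  have hπ : π ≠ 0 := Real.pi_ne_zero
  -- the derivative of F on the open interval is the integrand
  have hderiv : ∀ x ∈ Set.Ioo (-a) a, HasDerivWithinAt F (f x) (Set.Ioi x) x := by
    intro x hx
    obtain ⟨hx1, hx2⟩ := hx
    have hxa : x ^ 2 < a ^ 2 := sq_lt_sq' hx1 hx2
    have hDx : 0 < D ^ 2 - x ^ 2 := by nlinarith
    have hax : 0 < a ^ 2 - x ^ 2 := by linarith
    obtain ⟨s, hsdef⟩ : ∃ y : ℝ, Real.sqrt (D ^ 2 - x ^ 2) = y := ⟨_, rfl⟩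
    have hs2 : s ^ 2 = D ^ 2 - x ^ 2 := by rw [← hsdef]; exact Real.sq_sqrt hDx.le
    have hs0 : 0 < s := hsdef ▸ Real.sqrt_pos.mpr hDx
    obtain ⟨r, hrdef⟩ : ∃ y : ℝ, Real.sqrt (a ^ 2 - x ^ 2) = y := ⟨_, rfl⟩
    have hr2 : r ^ 2 = a ^ 2 - x ^ 2 := by rw [← hrdef]; exact Real.sq_sqrt hax.le
    have hr0 : 0 < r := hrdef ▸ Real.sqrt_pos.mpr hax
    have hgsq : 1 - ((D - 2) * x / (2 * t * s)) ^ 2 = (D * r / (2 * t * s)) ^ 2 := by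
      field_simp
      linear_combination (4 * s ^ 2) * ht2 + (4 * (D - 1)) * hs2 - D ^ 2 * hr2 - D ^ 2 * ha2
    have hg1 : (D - 2) * x / (2 * t * Real.sqrt (D ^ 2 - x ^ 2)) ≠ 1 := by
      rw [hsdef]
      intro h
      rw [h] at hgsq
      have : (0:ℝ) < (D * r / (2 * t * s)) ^ 2 := by positivity
      simp at hgsq
      nlinarith
    have hg1' : (D - 2) * x / (2 * t * Real.sqrt (D ^ 2 - x ^ 2)) ≠ -1 := by
      rw [hsdef]
      intro h
      rw [h] at hgsq
      have : (0:ℝ) < (D * r / (2 * t * s)) ^ 2 := by positivity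
      simp at hgsq
      nlinarith
    have hxa1 : x / a ≠ 1 := by
      intro h
      rw [div_eq_one_iff_eq ha0.ne'] at h
      nlinarith
    have hxa1' : x / a ≠ -1 := by
      intro h
      rw [div_eq_iff ha0.ne'] at h
      nlinarith
    have hsq1 : Real.sqrt (1 - (x / a) ^ 2) = r / a := by
      rw [show 1 - (x / a) ^ 2 = (r / a) ^ 2 by field_simp; linear_combination -hr2]
      exact Real.sqrt_sq (by positivity)
    have hsq2 : Real.sqrt (1 - ((D - 2) * x / (2 * t * Real.sqrt (D ^ 2 - x ^ 2))) ^ 2)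
        = D * r / (2 * t * s) := by
      rw [hsdef, hgsq]
      exact Real.sqrt_sq (by positivity)
    have hpoly : HasDerivAt (fun y : ℝ => D ^ 2 - y ^ 2) (-(2 * x)) x := by
      simpa using (hasDerivAt_pow 2 x).const_sub (D ^ 2)
    have hsqrtD : HasDerivAt (fun y : ℝ => Real.sqrt (D ^ 2 - y ^ 2))
        (1 / (2 * Real.sqrt (D ^ 2 - x ^ 2)) * (-(2 * x))) x :=
      (Real.hasDerivAt_sqrt hDx.ne').comp x hpoly
    have hnum : HasDerivAt (fun y : ℝ => (D - 2) * y) (D - 2) x := by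
      simpa using (hasDerivAt_id x).const_mul (D - 2)
    have hden : HasDerivAt (fun y : ℝ => 2 * t * Real.sqrt (D ^ 2 - y ^ 2))
        (2 * t * (1 / (2 * Real.sqrt (D ^ 2 - x ^ 2)) * (-(2 * x)))) x := hsqrtD.const_mul (2 * t)
    have hdenne : 2 * t * Real.sqrt (D ^ 2 - x ^ 2) ≠ 0 := by
      rw [hsdef]; positivity
    have hgder : HasDerivAt (fun y : ℝ => (D - 2) * y / (2 * t * Real.sqrt (D ^ 2 - y ^ 2)))
        ((D - 2) * D ^ 2 / (2 * t * s ^ 3)) x := by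
      have h := hnum.div hden hdenne
      refine h.congr_deriv ?_
      rw [hsdef]
      field_simp
      linear_combination (D - 2) * hs2
    have harc2 : HasDerivAt
        (fun y => Real.arcsin ((D - 2) * y / (2 * t * Real.sqrt (D ^ 2 - y ^ 2))))
        (1 / Real.sqrt (1 - ((D - 2) * x / (2 * t * Real.sqrt (D ^ 2 - x ^ 2))) ^ 2)
          * ((D - 2) * D ^ 2 / (2 * t * s ^ 3))) x := by
      have := (Real.hasDerivAt_arcsin hg1' hg1).comp x hgder; exact this
    have harc1 : HasDerivAt (fun y : ℝ => Real.arcsin (y / a))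
        (1 / Real.sqrt (1 - (x / a) ^ 2) * (1 / a)) x := by
      have h1 : HasDerivAt (fun y : ℝ => y / a) (1 / a) x := by
        simpa using (hasDerivAt_id x).div_const a
      exact (Real.hasDerivAt_arcsin hxa1' hxa1).comp x h1
    have hF : HasDerivAt F
        (D / (2 * π) * (1 / Real.sqrt (1 - (x / a) ^ 2) * (1 / a))
          - (D - 2) / (2 * π) *
            (1 / Real.sqrt (1 - ((D - 2) * x / (2 * t * Real.sqrt (D ^ 2 - x ^ 2))) ^ 2)
              * ((D - 2) * D ^ 2 / (2 * t * s ^ 3)))) x := by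
      rw [hFdef]
      exact (harc1.const_mul (D / (2 * π))).sub (harc2.const_mul ((D - 2) / (2 * π)))
    have hval : f x = D / (2 * π) * (1 / Real.sqrt (1 - (x / a) ^ 2) * (1 / a))
          - (D - 2) / (2 * π) *
            (1 / Real.sqrt (1 - ((D - 2) * x / (2 * t * Real.sqrt (D ^ 2 - x ^ 2))) ^ 2)
              * ((D - 2) * D ^ 2 / (2 * t * s ^ 3))) := by
      have hrr : Real.sqrt (4 * (D - 1) - x ^ 2) = r := by rw [← hrdef, ha2]
      have hfx : f x = D * Real.sqrt (4 * (D - 1) - x ^ 2) / (2 * π * (D ^ 2 - x ^ 2)) :=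
        congrFun hfdef x
      rw [hfx, hsq1, hsq2, hrr, ← hs2]
      exact km_alg D t a s r hD0 ht0 ha0 hs0 hr0 (by linear_combination hr2 - hs2 + ha2)
    rw [hval]
    exact hF.hasDerivWithinAt
  -- continuity of F on the closed interval
  have hcont : ContinuousOn F (Set.Icc (-a) a) := by
    have hc1 : Continuous fun x : ℝ => D / (2 * π) * Real.arcsin (x / a) :=
      continuous_const.mul (Real.continuous_arcsin.comp (continuous_id.div_const a))
    rcases lt_or_eq_of_le hd with hd2 | hd2
    · have hD2 : (2:ℝ) < D := by rw [hDdef]; exact_mod_cast hd2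
      have haD' : a < D := by nlinarith
      have hc2 : ContinuousOn
          (fun x : ℝ => (D - 2) * x / (2 * t * Real.sqrt (D ^ 2 - x ^ 2))) (Set.Icc (-a) a) := by
        apply ContinuousOn.div
        · exact (continuous_const.mul continuous_id).continuousOn
        · exact (continuous_const.mul (Real.continuous_sqrt.comp (by continuity))).continuousOn
        · intro x hx
          obtain ⟨hx1, hx2⟩ := hx
          have hxa : x ^ 2 ≤ a ^ 2 := sq_le_sq' hx1 hx2
          have h1 : 0 < D ^ 2 - x ^ 2 := by nlinarith
          have h2 : 0 < Real.sqrt (D ^ 2 - x ^ 2) := Real.sqrt_pos.mpr h1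
          positivity
      rw [hFdef]
      exact (hc1.continuousOn).sub
        (continuousOn_const.mul (Real.continuous_arcsin.comp_continuousOn hc2))
    · have hD2 : D = 2 := by rw [hDdef, ← hd2]; norm_num
      apply (hc1.continuousOn.sub (continuousOn_const (c := (0:ℝ)))).congr
      intro x hx
      simp [hFdef, hD2]
  -- interval integrability of the integrand
  have hint : IntervalIntegrable f volume (-a) a := by
    rcases lt_or_eq_of_le hd with hd2 | hd2
    · have hD2 : (2:ℝ) < D := by rw [hDdef]; exact_mod_cast hd2
      have haD' : a < D := by nlinarith
      apply ContinuousOn.intervalIntegrable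
      rw [Set.uIcc_of_le (by linarith : -a ≤ a), hfdef]
      apply ContinuousOn.div
      · exact (continuous_const.mul (Real.continuous_sqrt.comp (by continuity))).continuousOn
      · exact (by continuity : Continuous fun x : ℝ => 2 * π * (D ^ 2 - x ^ 2)).continuousOn
      · intro x hx
        obtain ⟨hx1, hx2⟩ := hx
        have hxa : x ^ 2 ≤ a ^ 2 := sq_le_sq' hx1 hx2
        have hpos : 0 < D ^ 2 - x ^ 2 := by nlinarith
        positivity
    · have hD2 : D = 2 := by rw [hDdef, ← hd2]; norm_num
      have ht : t = 1 := by nlinarith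
      have haa : a = 2 := by rw [hadef, ht]; norm_num
      have hf : f = fun x : ℝ => 2 * Real.sqrt (4 - x ^ 2) / (2 * π * (4 - x ^ 2)) := by
        funext x
        rw [hfdef, hD2]
        norm_num
      rw [hf, haa]
      exact km_aux_integrable_two
  have key := intervalIntegral.integral_eq_sub_of_hasDeriv_right_of_le (by linarith : -a ≤ a)
    hcont hderiv hint
  -- evaluate F at the endpoints
  have hFa : F a - F (-a) = 1 := by
    have h1 : a / a = 1 := div_self ha0.ne'
    have h2 : (-a) / a = -1 := by rw [neg_div, h1]
    have hgneg : (D - 2) * (-a) / (2 * t * Real.sqrt (D ^ 2 - (-a) ^ 2))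
        = -((D - 2) * a / (2 * t * Real.sqrt (D ^ 2 - a ^ 2))) := by
      rw [neg_sq, mul_neg, neg_div]
    have claim : (D - 2) * Real.arcsin ((D - 2) * a / (2 * t * Real.sqrt (D ^ 2 - a ^ 2)))
        = (D - 2) * (π / 2) := by
      rcases lt_or_eq_of_le hd with hd2 | hd2
      · have hD2 : (2:ℝ) < D := by rw [hDdef]; exact_mod_cast hd2
        have hs : Real.sqrt (D ^ 2 - a ^ 2) = D - 2 := by
          rw [show D ^ 2 - a ^ 2 = (D - 2) ^ 2 by linear_combination -ha2]
          exact Real.sqrt_sq (by linarith)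
        have hone : (D - 2) * a / (2 * t * Real.sqrt (D ^ 2 - a ^ 2)) = 1 := by
          have hne : D - 2 ≠ 0 := by linarith
          rw [hs, hadef]
          field_simp
        rw [hone, Real.arcsin_one]
      · have hD2 : D = 2 := by rw [hDdef, ← hd2]; norm_num
        rw [hD2]
        norm_num
    rw [hFdef]
    simp only [h1, h2, hgneg, Real.arcsin_one, Real.arcsin_neg]
    linear_combination (-1/π) * claim + mul_inv_cancel₀ hπ
  exact key.trans hFa
end

section
/- For every integer d > 2, ∫_{-2√(d-1)}^{2√(d-1)} |x| · d·√(4(d-1) - x²) / (2π·(d² - x²)) dx = (2d√(d-1))/π - (d(d-2)/π)·arctan(2√(d-1)/(d-2)). -/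
open Real

theorem kesten_mckay_abs_moment (d : ℕ) (hd : 2 < d) :
    ∫ x in (-(2 * Real.sqrt (d - 1)))..(2 * Real.sqrt (d - 1)),
      |x| * ((d : ℝ) * Real.sqrt (4 * (d - 1) - x ^ 2) / (2 * π * ((d : ℝ) ^ 2 - x ^ 2))) =
      2 * d * Real.sqrt (d - 1) / π -
        (d : ℝ) * (d - 2) / π * Real.arctan (2 * Real.sqrt (d - 1) / (d - 2)) := by
  have hd3 : (3:ℝ) ≤ (d:ℝ) := by exact_mod_cast hd
  set D : ℝ := (d:ℝ) with hD
  set f : ℝ → ℝ := fun x => |x| * (D * Real.sqrt (4 * (D - 1) - x ^ 2) / (2 * π * (D ^ 2 - x ^ 2))) with hf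
  set b : ℝ := 2 * Real.sqrt (D - 1) with hb
  set c : ℝ := D - 2 with hc
  have hcpos : 0 < c := by simp only [hc]; linarith
  have hb2 : b ^ 2 = 4 * (D - 1) := by
    rw [hb, mul_pow, Real.sq_sqrt (by linarith)]; ring
  have hbpos : 0 < b := by
    have : 0 < Real.sqrt (D - 1) := Real.sqrt_pos.mpr (by linarith)
    rw [hb]; linarith
  have hbD : b < D := by nlinarith [hb2]
  have hpi : (π:ℝ) ≠ 0 := Real.pi_ne_zero
  -- continuity of f on [-b, b]
  have hcont : ∀ x : ℝ, -b ≤ x → x ≤ b → ContinuousAt f x := by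
    intro x hx1 hx2
    have hden : 2 * π * (D ^ 2 - x ^ 2) ≠ 0 := by
      have : x ^ 2 ≤ b ^ 2 := by nlinarith
      have : D ^ 2 - x ^ 2 > 0 := by nlinarith
      positivity
    exact (continuous_abs.continuousAt).mul
      (((continuous_const.mul ((continuous_const.sub (continuous_pow 2)).sqrt)).continuousAt).div
        ((continuous_const.mul (continuous_const.sub (continuous_pow 2))).continuousAt) hden)
  have hcontOn : ∀ a₁ a₂ : ℝ, -b ≤ a₁ → a₂ ≤ b → a₁ ≤ a₂ → IntervalIntegrable f MeasureTheory.volume a₁ a₂ := by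
    intro a₁ a₂ h1 h2 h12
    apply ContinuousOn.intervalIntegrable
    intro x hx
    rw [Set.uIcc_of_le h12] at hx
    exact (hcont x (le_trans h1 hx.1) (le_trans hx.2 h2)).continuousWithinAt
  -- even function reduction
  have hint1 : IntervalIntegrable f MeasureTheory.volume (-b) 0 :=
    hcontOn _ _ le_rfl hbpos.le (by linarith)
  have hint2 : IntervalIntegrable f MeasureTheory.volume 0 b :=
    hcontOn _ _ (by linarith) le_rfl hbpos.le
  have heven : ∀ x : ℝ, f (-x) = f x := by
    intro x; simp [hf, neg_pow]
  have hsym : ∫ x in (-b)..b, f x = 2 * ∫ x in (0:ℝ)..b, f x := by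
    rw [← intervalIntegral.integral_add_adjacent_intervals hint1 hint2]
    have h := intervalIntegral.integral_comp_neg (a := (0:ℝ)) (b := b) f
    simp only [heven, neg_zero] at h
    rw [← h]; ring
  -- antiderivative
  set F : ℝ → ℝ := fun x => D / (2 * π) *
    (-(Real.sqrt (b ^ 2 - x ^ 2)) + c * Real.arctan (Real.sqrt (b ^ 2 - x ^ 2) / c)) with hF
  have hFderiv : ∀ x ∈ Set.Ioo (0:ℝ) b, HasDerivAt F (f x) x := by
    intro x hx
    obtain ⟨hx0, hxb⟩ := hx
    have hu : 0 < b ^ 2 - x ^ 2 := by nlinarith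
    set s : ℝ := Real.sqrt (b ^ 2 - x ^ 2) with hs
    have hspos : 0 < s := Real.sqrt_pos.mpr hu
    have hs2 : s ^ 2 = b ^ 2 - x ^ 2 := Real.sq_sqrt hu.le
    have h1 : HasDerivAt (fun y : ℝ => b ^ 2 - y ^ 2) (-(2 * x)) x := by
      exact ((hasDerivAt_const x (b^2)).sub (hasDerivAt_pow 2 x)).congr_deriv (by norm_num)
    have hsq : HasDerivAt (fun y : ℝ => Real.sqrt (b ^ 2 - y ^ 2)) (-(2 * x) / (2 * s)) x :=
      h1.sqrt hu.ne'
    have harc : HasDerivAt (fun y : ℝ => Real.arctan (Real.sqrt (b ^ 2 - y ^ 2) / c))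
        (1 / (1 + (s / c) ^ 2) * (-(2 * x) / (2 * s) / c)) x :=
      by have := (Real.hasDerivAt_arctan (Real.sqrt (b ^ 2 - x ^ 2) / c)).comp x (hsq.div_const c); exact this
    have hcomb : HasDerivAt F (D / (2 * π) *
        (-(-(2 * x) / (2 * s)) + c * (1 / (1 + (s / c) ^ 2) * (-(2 * x) / (2 * s) / c)))) x :=
      (hsq.neg.add (harc.const_mul c)).const_mul (D / (2 * π))
    convert hcomb using 1
    have hxabs : |x| = x := abs_of_pos hx0
    have hDx : D ^ 2 - x ^ 2 = c ^ 2 + s ^ 2 := by rw [hs2, hb2, hc]; ring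
    have hDx0 : D ^ 2 - x ^ 2 > 0 := by nlinarith
    have hsqrtval : Real.sqrt (4 * (D - 1) - x ^ 2) = s := by rw [hs, hb2]
    rw [hf]
    simp only [hxabs, hsqrtval]
    have h1c : 1 + (s / c) ^ 2 = (D ^ 2 - x ^ 2) / c ^ 2 := by
      rw [hDx]; field_simp
    rw [h1c, hDx]
    have hcs : c ^ 2 + s ^ 2 ≠ 0 := by positivity
    field_simp
    ring
  have hFcont : ContinuousOn F (Set.Icc 0 b) :=
    (continuous_const.mul
      (((continuous_const.sub (continuous_pow 2)).sqrt.neg).add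
        (continuous_const.mul (Real.continuous_arctan.comp
          (((continuous_const.sub (continuous_pow 2)).sqrt).div_const c))))).continuousOn
  have hFTC : ∫ x in (0:ℝ)..b, f x = F b - F 0 :=
    intervalIntegral.integral_eq_sub_of_hasDeriv_right_of_le hbpos.le hFcont
      (fun x hx => (hFderiv x hx).hasDerivWithinAt) hint2
  have hFb : F b = 0 := by
    simp [hF]
  have hF0 : F 0 = D / (2 * π) * (-b + c * Real.arctan (b / c)) := by
    rw [hF]
    norm_num [Real.sqrt_sq hbpos.le]
  show (∫ x in (-b)..b, f x) = 2 * D * Real.sqrt (D - 1) / π - D * c / π * Real.arctan (b / c)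
  rw [hsym, hFTC, hFb, hF0, hb]
  field_simp
  ring
end
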